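/- Let A be a finite subdirectly irreducible algebra with a Mal'cev polynomial whose monolith μ is non-Abelian ([μ,μ] ≠ 0_A). Let o ∈ A, U = o/μ its μ-class, k ∈ ℕ, D ⊆ A^k and l: D → U a function. Then for every finite subset T ⊆ D there exists a k-ary polynomial operation p of A such that p(t) = l(t) for all t ∈ T and p(x) ∈ U for all x ∈ A^k. -/

import Mathlib

/-- A clone on a set `A`: a family of finitary operations containing all
projections and closed under composition. -/
structure Clone (A : Type) where
  ops : ∀ n : ℕ, Set ((Fin n → A) → A)
  proj_mem : ∀ (n : ℕ) (i : Fin n), (fun x => x i) ∈ ops n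
  comp_mem : ∀ (m n : ℕ) (f : (Fin n → A) → A) (g : Fin n → (Fin m → A) → A),
      f ∈ ops n → (∀ i, g i ∈ ops m) → (fun x => f (fun i => g i x)) ∈ ops m

/-- `X ⊆ A^n` is algebraic w.r.t. a family of operations `F`: it is the solution
set of some system of equations between `n`-ary members of `F`. -/
def IsAlgSet {A : Type} (F : ∀ n : ℕ, Set ((Fin n → A) → A)) (n : ℕ)
    (X : Set (Fin n → A)) : Prop :=
  ∃ (I : Type) (p q : I → (Fin n → A) → A),
    (∀ i, p i ∈ F n) ∧ (∀ i, q i ∈ F n) ∧ X = {x | ∀ i, p i x = q i x}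

/-- Equational additivity: unions of algebraic sets of the same arity are algebraic. -/
def EqAdditive {A : Type} (F : ∀ n : ℕ, Set ((Fin n → A) → A)) : Prop :=
  ∀ (n : ℕ) (X Y : Set (Fin n → A)),
    IsAlgSet F n X → IsAlgSet F n Y → IsAlgSet F n (X ∪ Y)

/-- The quaternary relation `Δ_A`. -/
def Delta (A : Type) : Set (Fin 4 → A) := {x | x 0 = x 1 ∨ x 2 = x 3}
/-- Polynomial operations over a clone: generated by the clone, the constants
and the projections, closed under composition. -/
inductive PolyOp {A : Type} (C : Clone A) : ∀ n : ℕ, ((Fin n → A) → A) → Prop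
  | base {n : ℕ} {f : (Fin n → A) → A} : f ∈ C.ops n → PolyOp C n f
  | const {n : ℕ} (a : A) : PolyOp C n (fun _ => a)
  | proj {n : ℕ} (i : Fin n) : PolyOp C n (fun x => x i)
  | comp {m n : ℕ} {f : (Fin n → A) → A} {g : Fin n → (Fin m → A) → A} :
      PolyOp C n f → (∀ i, PolyOp C m (g i)) → PolyOp C m (fun x => f (fun i => g i x))

/-- The clone of polynomial operations of the algebra `(A; C)`. -/
def PolClone {A : Type} (C : Clone A) : Clone A where
  ops n := {f | PolyOp C n f}
  proj_mem n i := PolyOp.proj i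
  comp_mem _ _ _ _ hf hg := PolyOp.comp hf hg

/-- A congruence of the algebra `(A; C)`: an equivalence relation compatible
with all operations of the clone. -/
def IsCong {A : Type} (C : Clone A) (θ : A → A → Prop) : Prop :=
  Equivalence θ ∧ ∀ (n : ℕ) (f : (Fin n → A) → A), f ∈ C.ops n →
    ∀ x y : Fin n → A, (∀ i, θ (x i) (y i)) → θ (f x) (f y)

/-- `d` is a Mal'cev operation. -/
def IsMalcev {A : Type} (d : A → A → A → A) : Prop :=
  ∀ a b : A, d a b b = a ∧ d b b a = a

/-- The algebra `(A; C)` has a Mal'cev polynomial. -/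
def HasMalcevPoly {A : Type} (C : Clone A) : Prop :=
  ∃ d : A → A → A → A,
    (fun x : Fin 3 → A => d (x 0) (x 1) (x 2)) ∈ (PolClone C).ops 3 ∧ IsMalcev d

/-- `α` centralizes `β` modulo `η` (the term condition). -/
def Centralizes {A : Type} (C : Clone A) (α β η : A → A → Prop) : Prop :=
  ∀ (m k : ℕ) (p : (Fin (m + k) → A) → A), p ∈ (PolClone C).ops (m + k) →
    ∀ (a b : Fin m → A) (u v : Fin k → A),
      (∀ i, α (a i) (b i)) → (∀ i, β (u i) (v i)) →
      η (p (Fin.append a u)) (p (Fin.append a v)) →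
      η (p (Fin.append b u)) (p (Fin.append b v))

/-- The term condition commutator `[α, β]`: the least congruence `η` such that
`α` centralizes `β` modulo `η` (realized as the intersection of all such). -/
def CommRel {A : Type} (C : Clone A) (α β : A → A → Prop) (x y : A) : Prop :=
  ∀ η : A → A → Prop, IsCong C η → Centralizes C α β η → η x y

/-- The congruence of `(A; C)` generated by a binary relation `r`. -/
def CongGen {A : Type} (C : Clone A) (r : A → A → Prop) (x y : A) : Prop :=
  ∀ θ : A → A → Prop, IsCong C θ → (∀ a b, r a b → θ a b) → θ x y
section Aux
variable {A : Type} {C : Clone A}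

lemma polyComp1 {q : A → A} (hq : PolyOp C 1 (fun w => q (w 0))) {n : ℕ}
    {g : (Fin n → A) → A} (hg : PolyOp C n g) : PolyOp C n (fun x => q (g x)) :=
  PolyOp.comp hq (fun _ => hg)

lemma polyComp2 {F : A → A → A} (hF : PolyOp C 2 (fun w => F (w 0) (w 1))) {n : ℕ}
    {g0 g1 : (Fin n → A) → A} (h0 : PolyOp C n g0) (h1 : PolyOp C n g1) :
    PolyOp C n (fun x => F (g0 x) (g1 x)) :=
  PolyOp.comp hF (g := ![g0, g1]) (fun i => by fin_cases i <;> assumption)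

lemma polyComp3 {d : A → A → A → A}
    (hd : PolyOp C 3 (fun w : Fin 3 → A => d (w 0) (w 1) (w 2))) {n : ℕ}
    {g0 g1 g2 : (Fin n → A) → A} (h0 : PolyOp C n g0) (h1 : PolyOp C n g1)
    (h2 : PolyOp C n g2) : PolyOp C n (fun x => d (g0 x) (g1 x) (g2 x)) :=
  PolyOp.comp hd (g := ![g0, g1, g2]) (fun i => by fin_cases i <;> assumption)

end Aux
def bigOp {A X : Type} (m : A → A → A) (e : A) : List (X → A) → (X → A)
  | [] => fun _ => e
  | g :: fs => fun t => m (g t) (bigOp m e fs t)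

section Aux2
variable {A : Type} {C : Clone A}

lemma bigOp_poly {m : A → A → A} {e : A}
    (hm : PolyOp C 2 (fun w => m (w 0) (w 1))) {k : ℕ} :
    ∀ fs : List ((Fin k → A) → A), (∀ g ∈ fs, PolyOp C k g) →
      PolyOp C k (bigOp m e fs) := by
  intro fs h
  induction fs with
  | nil => exact PolyOp.const e
  | cons g fs ih =>
      exact polyComp2 hm (h g (List.mem_cons_self))
        (ih (fun g' hg' => h g' (List.mem_cons_of_mem _ hg')))

lemma bigOp_all_e {X : Type} {m : A → A → A} {e : A} (hm : m e e = e) :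
    ∀ (fs : List (X → A)) (t : X), (∀ g ∈ fs, g t = e) → bigOp m e fs t = e := by
  intro fs t h
  induction fs with
  | nil => rfl
  | cons g fs ih =>
      show m (g t) (bigOp m e fs t) = e
      rw [h g (List.mem_cons_self), ih (fun g' hg' => h g' (List.mem_cons_of_mem _ hg'))]
      exact hm

lemma bigOp_exists_o {X : Type} {m : A → A → A} {e o : A}
    (hl : ∀ z, m o z = o) (hr : ∀ z, m z o = o) :
    ∀ (fs : List (X → A)) (t : X), (∃ g ∈ fs, g t = o) → bigOp m e fs t = o := by
  intro fs t h
  induction fs with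
  | nil => obtain ⟨g, hg, _⟩ := h; exact absurd hg List.not_mem_nil
  | cons g fs ih =>
      show m (g t) (bigOp m e fs t) = o
      obtain ⟨g', hg', hgo⟩ := h
      rcases List.mem_cons.mp hg' with h1 | h1
      · rw [h1] at hgo; rw [hgo]; exact hl _
      · rw [ih ⟨g', h1, hgo⟩]; exact hr _

lemma bigOp_zero {X : Type} {m : A → A → A} {o : A} (hl : ∀ z, m o z = z) :
    ∀ (fs : List (X → A)) (t : X), (∀ g ∈ fs, g t = o) → bigOp m o fs t = o := by
  intro fs t h
  induction fs with
  | nil => rfl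
  | cons g fs ih =>
      show m (g t) (bigOp m o fs t) = o
      rw [h g (List.mem_cons_self),
        ih (fun g' hg' => h g' (List.mem_cons_of_mem _ hg')), hl]

lemma bigOp_single {X : Type} {m : A → A → A} {o : A}
    (hl : ∀ z, m o z = z) (hr : ∀ z, m z o = z) :
    ∀ (fs1 : List (X → A)) (g : X → A) (fs2 : List (X → A)) (t : X),
      (∀ g' ∈ fs1, g' t = o) → (∀ g' ∈ fs2, g' t = o) →
      bigOp m o (fs1 ++ g :: fs2) t = g t := by
  intro fs1 g fs2 t h1 h2
  induction fs1 with
  | nil =>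
      show m (g t) (bigOp m o fs2 t) = g t
      rw [bigOp_zero hl fs2 t h2]; exact hr _
  | cons g' fs1 ih =>
      show m (g' t) (bigOp m o (fs1 ++ g :: fs2) t) = g t
      rw [h1 g' (List.mem_cons_self),
        ih (fun g'' hg'' => h1 g'' (List.mem_cons_of_mem _ hg'')), hl]

end Aux2
section Aux3
variable {A : Type} {C : Clone A}

lemma pairPoly {d : A → A → A → A}
    (hd : PolyOp C 3 (fun w : Fin 3 → A => d (w 0) (w 1) (w 2)))
    (hdM : IsMalcev d) {μ : A → A → Prop}
    (hmono : ∀ θ : A → A → Prop, IsCong C θ → (∃ a b : A, a ≠ b ∧ θ a b) →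
      ∀ x y : A, μ x y → θ x y)
    {x y : A} (hxy : x ≠ y) {s t : A} (hst : μ s t) :
    ∃ q : A → A, PolyOp C 1 (fun w => q (w 0)) ∧ q x = s ∧ q y = t := by
  set G : A → A → Prop := fun s' t' =>
    ∃ q : A → A, PolyOp C 1 (fun w => q (w 0)) ∧ q x = s' ∧ q y = t' with hG
  have hGcong : IsCong C G := by
    constructor
    · constructor
      · intro a; exact ⟨fun _ => a, PolyOp.const a, rfl, rfl⟩
      · rintro a c ⟨q, hq, h1, h2⟩
        refine ⟨fun z => d (q x) (q z) (q y),
          polyComp3 hd (PolyOp.const _) hq (PolyOp.const _), ?_, ?_⟩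
        · show d (q x) (q x) (q y) = c
          rw [h1, h2]; exact (hdM c a).2
        · show d (q x) (q y) (q y) = a
          rw [h1, h2]; exact (hdM a c).1
      · rintro a c e ⟨q1, hq1, h11, h12⟩ ⟨q2, hq2, h21, h22⟩
        refine ⟨fun z => d (q1 z) (q1 y) (q2 z),
          polyComp3 hd hq1 (PolyOp.const _) hq2, ?_, ?_⟩
        · show d (q1 x) (q1 y) (q2 x) = a
          rw [h11, h12, h21]; exact (hdM a c).1
        · show d (q1 y) (q1 y) (q2 y) = e
          rw [h12, h22]; exact (hdM e c).2
    · intro n F hF xs ys hxs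
      choose q hq h1 h2 using hxs
      refine ⟨fun z => F (fun i => q i z),
        PolyOp.comp (PolyOp.base hF) (fun i => hq i), ?_, ?_⟩
      · exact congrArg F (funext h1)
      · exact congrArg F (funext h2)
  exact hmono G hGcong ⟨x, y, hxy, ⟨id, PolyOp.proj 0, rfl, rfl⟩⟩ s t hst

lemma tcFail {μ : A → A → Prop}
    (hnab : ∃ a b : A, a ≠ b ∧ CommRel C μ μ a b) :
    ¬ Centralizes C μ μ (fun x y : A => x = y) := by
  obtain ⟨a, b, hab, h⟩ := hnab
  intro hc
  exact hab (h _ ⟨eq_equivalence, fun n f _ x y hxy => congrArg f (funext hxy)⟩ hc)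

end Aux3
section Aux4
variable {A : Type} {C : Clone A}

lemma conjPoly {d : A → A → A → A}
    (hd : PolyOp C 3 (fun w : Fin 3 → A => d (w 0) (w 1) (w 2)))
    (hdM : IsMalcev d) {μ : A → A → Prop}
    (hmono : ∀ θ : A → A → Prop, IsCong C θ → (∃ a b : A, a ≠ b ∧ θ a b) →
      ∀ x y : A, μ x y → θ x y)
    (hnc : ¬ Centralizes C μ μ (fun x y : A => x = y))
    {o one : A} (hone : μ o one) (hone' : o ≠ one) :
    ∃ m : A → A → A, PolyOp C 2 (fun w => m (w 0) (w 1)) ∧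
      (∀ z, m o z = o) ∧ (∀ z, m z o = o) ∧ m one one = one := by
  unfold Centralizes at hnc
  push_neg at hnc
  obtain ⟨m0, k0, p, hp, a, b, u, v, hab, huv, heq, hne⟩ := hnc
  have hpP : PolyOp C (m0 + k0) p := hp
  choose eb hebP hebo hebone using
    fun i => pairPoly hd hdM hmono hone' (hab i)
  choose gb hgbP hgbo hgbone using
    fun j => pairPoly hd hdM hmono hone' (huv j)
  set β := p (Fin.append b u) with hβ
  set γ := p (Fin.append b v) with hγ
  set K : A → A → A := fun s t =>
    d (p (Fin.append (fun i => eb i t) (fun j => gb j s)))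
      (p (Fin.append (fun i => eb i t) u)) β with hK
  have hKo : ∀ t, K o t = β := by
    intro t
    show d (p (Fin.append (fun i => eb i t) (fun j => gb j o)))
      (p (Fin.append (fun i => eb i t) u)) β = β
    rw [show (fun j => gb j o) = u from funext fun j => hgbo j]
    exact (hdM β _).2
  have hK10 : K one o = β := by
    show d (p (Fin.append (fun i => eb i o) (fun j => gb j one)))
      (p (Fin.append (fun i => eb i o) u)) β = β
    rw [show (fun j => gb j one) = v from funext fun j => hgbone j,
        show (fun i => eb i o) = a from funext fun i => hebo i, ← heq]
    exact (hdM β _).2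
  have hK11 : K one one = γ := by
    show d (p (Fin.append (fun i => eb i one) (fun j => gb j one)))
      (p (Fin.append (fun i => eb i one) u)) β = γ
    rw [show (fun j => gb j one) = v from funext fun j => hgbone j,
        show (fun i => eb i one) = b from funext fun i => hebone i]
    exact (hdM γ β).1
  have hKP : PolyOp C 2 (fun w : Fin 2 → A => K (w 0) (w 1)) := by
    show PolyOp C 2 (fun w : Fin 2 → A =>
      d (p (Fin.append (fun i => eb i (w 1)) (fun j => gb j (w 0))))
        (p (Fin.append (fun i => eb i (w 1)) u)) β)
    apply polyComp3 hd
    · exact PolyOp.comp hpP (fun idx => by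
        refine Fin.addCases (motive := fun idx => PolyOp C 2 (fun w : Fin 2 → A =>
          Fin.append (fun i => eb i (w 1)) (fun j => gb j (w 0)) idx)) ?_ ?_ idx
        · intro i; simp only [Fin.append_left]
          exact polyComp1 (hebP i) (PolyOp.proj 1)
        · intro j; simp only [Fin.append_right]
          exact polyComp1 (hgbP j) (PolyOp.proj 0))
    · exact PolyOp.comp hpP (fun idx => by
        refine Fin.addCases (motive := fun idx => PolyOp C 2 (fun w : Fin 2 → A =>
          Fin.append (fun i => eb i (w 1)) u idx)) ?_ ?_ idx
        · intro i; simp only [Fin.append_left]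
          exact polyComp1 (hebP i) (PolyOp.proj 1)
        · intro j; simp only [Fin.append_right]
          exact PolyOp.const (u j))
    · exact PolyOp.const β
  obtain ⟨r, hrP, hrβ, hrγ⟩ := pairPoly hd hdM hmono hne hone
  refine ⟨fun s t => d (r (K s t)) (r (K s o)) o, ?_, ?_, ?_, ?_⟩
  · show PolyOp C 2 (fun w : Fin 2 → A => d (r (K (w 0) (w 1))) (r (K (w 0) o)) o)
    apply polyComp3 hd
    · exact polyComp1 hrP hKP
    · exact polyComp1 hrP (polyComp2 hKP (PolyOp.proj 0) (PolyOp.const o))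
    · exact PolyOp.const o
  · intro z
    show d (r (K o z)) (r (K o o)) o = o
    rw [hKo z, hKo o, hrβ]
    exact (hdM o o).1
  · intro z
    show d (r (K z o)) (r (K z o)) o = o
    exact (hdM o (r (K z o))).2
  · show d (r (K one one)) (r (K one o)) o = one
    rw [hK11, hK10, hrγ, hrβ]
    exact (hdM one o).1

end Aux4
section Aux5
variable {A : Type} {C : Clone A}

lemma mainPoly [Finite A] {d : A → A → A → A}
    (hd : PolyOp C 3 (fun w : Fin 3 → A => d (w 0) (w 1) (w 2)))
    (hdM : IsMalcev d) {μ : A → A → Prop} (hμ : IsCong C μ)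
    (hmono : ∀ θ : A → A → Prop, IsCong C θ → (∃ a b : A, a ≠ b ∧ θ a b) →
      ∀ x y : A, μ x y → θ x y)
    (hnc : ¬ Centralizes C μ μ (fun x y : A => x = y))
    {o one : A} (hone : μ o one) (honene : one ≠ o)
    {k : ℕ} (f : (Fin k → A) → A) (hf : ∀ x, μ o (f x)) :
    PolyOp C k f := by
  classical
  have hone' : o ≠ one := Ne.symm honene
  obtain ⟨m, hmP, hm0l, hm0r, hm11⟩ := conjPoly hd hdM hmono hnc hone hone'
  haveI : Fintype A := Fintype.ofFinite A
  -- separating functions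
  have hsepEx : ∀ x y : Fin k → A, ∃ g : (Fin k → A) → A,
      PolyOp C k g ∧ g x = one ∧ (y ≠ x → g y = o) := by
    intro x y
    by_cases hxy : y = x
    · exact ⟨fun _ => one, PolyOp.const one, rfl, fun h => absurd hxy h⟩
    · obtain ⟨i, hi⟩ := Function.ne_iff.mp (Ne.symm hxy)
      obtain ⟨q, hq, h1, h2⟩ := pairPoly hd hdM hmono hi (hμ.1.symm hone)
      exact ⟨fun t => q (t i), polyComp1 hq (PolyOp.proj i), h1, fun _ => h2⟩
  choose sep hsepP hsep1 hsep2 using hsepEx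
  -- characteristic functions
  set χ : (Fin k → A) → (Fin k → A) → A := fun x =>
    bigOp m one ((Finset.univ.toList (α := Fin k → A)).map (sep x)) with hχ
  have hχP : ∀ x, PolyOp C k (χ x) := fun x =>
    bigOp_poly hmP _ (by
      intro g hg
      obtain ⟨y, _, rfl⟩ := List.mem_map.mp hg
      exact hsepP x y)
  have hχ1 : ∀ x, χ x x = one := fun x =>
    bigOp_all_e hm11 _ _ (by
      intro g hg
      obtain ⟨y, _, rfl⟩ := List.mem_map.mp hg
      exact hsep1 x y)
  have hχ0 : ∀ x t, t ≠ x → χ x t = o := fun x t ht =>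
    bigOp_exists_o hm0l hm0r _ _
      ⟨sep x t, List.mem_map_of_mem (Finset.mem_toList.mpr (Finset.mem_univ t)),
        hsep2 x t ht⟩
  -- scaling functions
  have hSEx : ∀ w : A, ∃ q : A → A, μ o w →
      PolyOp C 1 (fun z => q (z 0)) ∧ q o = o ∧ q one = w := by
    intro w
    by_cases hw : μ o w
    · obtain ⟨q, hq, h1, h2⟩ := pairPoly hd hdM hmono hone' hw
      exact ⟨q, fun _ => ⟨hq, h1, h2⟩⟩
    · exact ⟨id, fun h => absurd h hw⟩
  choose S hS using hSEx
  -- summation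
  set add : A → A → A := fun s t => d s o t with hadd
  have haddP : PolyOp C 2 (fun w : Fin 2 → A => add (w 0) (w 1)) := by
    show PolyOp C 2 (fun w : Fin 2 → A => d (w 0) o (w 1))
    exact polyComp3 hd (PolyOp.proj 0) (PolyOp.const o) (PolyOp.proj 1)
  have haddl : ∀ z, add o z = z := fun z => (hdM z o).2
  have haddr : ∀ z, add z o = z := fun z => (hdM z o).1
  set F : (Fin k → A) → (Fin k → A) → A := fun x => fun t => S (f x) (χ x t) with hF
  set fs := (Finset.univ.toList (α := Fin k → A)).map F with hfs
  have hPP : PolyOp C k (bigOp add o fs) := bigOp_poly haddP _ (by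
      intro g hg
      obtain ⟨y, _, rfl⟩ := List.mem_map.mp hg
      exact polyComp1 ((hS (f y) (hf y)).1) (hχP y))
  have hPt : ∀ t, bigOp add o fs t = f t := by
    intro t
    have htl : t ∈ Finset.univ.toList (α := Fin k → A) :=
      Finset.mem_toList.mpr (Finset.mem_univ t)
    obtain ⟨l1, l2, hsplit⟩ := List.append_of_mem htl
    have hnd : (Finset.univ.toList (α := Fin k → A)).Nodup := Finset.nodup_toList _
    rw [hsplit] at hnd
    have hnd1 := List.nodup_append'.mp hnd
    have htl1 : t ∉ l1 := fun h => hnd1.2.2 h List.mem_cons_self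
    have htl2 : t ∉ l2 := (List.nodup_cons.mp hnd1.2.1).1
    have h1 : ∀ g' ∈ l1.map F, g' t = o := by
      intro g' hg'
      obtain ⟨y, hy, rfl⟩ := List.mem_map.mp hg'
      have hyt : t ≠ y := fun h => htl1 (h ▸ hy)
      show S (f y) (χ y t) = o
      rw [hχ0 y t hyt]
      exact (hS (f y) (hf y)).2.1
    have h2 : ∀ g' ∈ l2.map F, g' t = o := by
      intro g' hg'
      obtain ⟨y, hy, rfl⟩ := List.mem_map.mp hg'
      have hyt : t ≠ y := fun h => htl2 (h ▸ hy)
      show S (f y) (χ y t) = o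
      rw [hχ0 y t hyt]
      exact (hS (f y) (hf y)).2.1
    have hfs2 : fs = l1.map F ++ F t :: l2.map F := by
      rw [hfs, hsplit, List.map_append, List.map_cons]
    rw [hfs2, bigOp_single haddl haddr (l1.map F) (F t) (l2.map F) t h1 h2]
    show S (f t) (χ t t) = f t
    rw [hχ1 t]
    exact (hS (f t) (hf t)).2.2
  exact (funext hPt : bigOp add o fs = f) ▸ hPP

end Aux5
/-- Interpolation in a finite subdirectly irreducible algebra with a Mal'cev
polynomial and non-Abelian monolith `μ`: any `U`-valued function defined on
`D ⊆ A^k` (where `U = o/μ`) can be interpolated on every finite subset of `D`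
by a `k`-ary polynomial whose image is contained in `U`. -/
theorem stmt19 {A : Type} [Finite A] (C : Clone A) (hM : HasMalcevPoly C)
    (μ : A → A → Prop) (hμ : IsCong C μ)
    (hnt : ∃ a b : A, a ≠ b ∧ μ a b)
    (hmono : ∀ θ : A → A → Prop, IsCong C θ → (∃ a b : A, a ≠ b ∧ θ a b) →
      ∀ x y : A, μ x y → θ x y)
    (hnab : ∃ a b : A, a ≠ b ∧ CommRel C μ μ a b)
    (o : A) (k : ℕ) (D : Set (Fin k → A)) (l : D → A) (hl : ∀ t : D, μ o (l t)) :
    ∀ T : Set (Fin k → A), T ⊆ D → T.Finite →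
      ∃ p : (Fin k → A) → A, p ∈ (PolClone C).ops k ∧
        (∀ t : D, (t : Fin k → A) ∈ T → p t = l t) ∧
        ∀ x : Fin k → A, μ o (p x) := by
  intro T hTD _hTfin
  classical
  obtain ⟨d, hd, hdM⟩ := hM
  by_cases h1 : ∃ w : A, w ≠ o ∧ μ o w
  · obtain ⟨one, honene, hone⟩ := h1
    have hnc := tcFail hnab
    set f : (Fin k → A) → A := fun x => if h : x ∈ D then l ⟨x, h⟩ else o with hfdef
    have hfU : ∀ x, μ o (f x) := by
      intro x
      by_cases hx : x ∈ D
      · simp only [hfdef, dif_pos hx]; exact hl ⟨x, hx⟩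
      · simp only [hfdef, dif_neg hx]; exact hμ.1.refl o
    have hfP : PolyOp C k f := mainPoly hd hdM hμ hmono hnc hone honene f hfU
    refine ⟨f, hfP, ?_, hfU⟩
    intro t _ht
    have htD : (t : Fin k → A) ∈ D := t.2
    simp only [hfdef, dif_pos htD]
  · push_neg at h1
    have hlo : ∀ t : D, l t = o := by
      intro t
      by_contra h
      exact h1 (l t) h (hl t)
    exact ⟨fun _ => o, PolyOp.const o, fun t _ => (hlo t).symm, fun _ => hμ.1.refl o⟩
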